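/- Let n ≥ 2 and let H be a powerful subgroup of the dihedral group DihedralGroup (2^n) of order 2^(n+1). Then either H is cyclic or H is isomorphic to the Klein four-group ZMod 2 × ZMod 2. Moreover, if H is cyclic of order greater than 2, then H is contained in the rotation subgroup generated by r 1. -/

import Mathlib

open DihedralGroup
open scoped commutatorElement

/-- A finite `p`-group `H` is *powerful* if, when `p` is odd, `[H,H]` is contained in the
subgroup generated by `p`-th powers, and when `p = 2`, `[H,H]` is contained in the subgroup
generated by fourth powers. -/
def IsPowerful (p : ℕ) (H : Type*) [Group H] : Prop :=
  commutator H ≤ Subgroup.closure {x : H | ∃ g : H, x = g ^ (if p = 2 then 4 else p)}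

section Aux
variable {N : ℕ}

lemma my_r_inv (m : ZMod N) : (r m)⁻¹ = r (-m) := by
  apply inv_eq_of_mul_eq_one_right; rw [r_mul_r, add_neg_cancel, one_def]

lemma my_sr_inv (m : ZMod N) : (sr m)⁻¹ = sr m := by
  apply inv_eq_of_mul_eq_one_right; exact sr_mul_self m

lemma my_r_pow (m : ZMod N) (k : ℕ) : (r m) ^ k = r ((k : ZMod N) * m) := by
  induction k with
  | zero => simp
  | succ k ih => rw [pow_succ, ih, r_mul_r]; congr 1; push_cast; ring

lemma my_r_zpow (m : ZMod N) (k : ℤ) : (r m) ^ k = r ((k : ZMod N) * m) := by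
  cases k with
  | ofNat k => rw [Int.ofNat_eq_natCast, zpow_natCast, my_r_pow]; push_cast; ring_nf
  | negSucc k =>
      rw [zpow_negSucc, my_r_pow, my_r_inv]
      congr 1
      push_cast [Int.negSucc_eq]
      ring

lemma isCyclic_zpowers {G : Type*} [Group G] (g : G) : IsCyclic (Subgroup.zpowers g) := by
  constructor
  refine ⟨⟨g, Subgroup.mem_zpowers _⟩, ?_⟩
  rintro ⟨x, hx⟩
  obtain ⟨k, rfl⟩ := hx
  exact ⟨k, by ext; simp⟩
end Aux


/-- A powerful subgroup of `DihedralGroup (2^n)` (`n ≥ 2`) is cyclic or isomorphic to the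
Klein four-group; and if it is cyclic of order greater than `2`, it is contained in the
rotation subgroup `⟨r 1⟩`. -/
theorem dihedral_powerful_subgroup (n : ℕ) (hn : 2 ≤ n)
    (H : Subgroup (DihedralGroup (2 ^ n))) (hH : IsPowerful 2 H) :
    (IsCyclic H ∨ Nonempty (H ≃* Multiplicative (ZMod 2 × ZMod 2))) ∧
      (IsCyclic H → 2 < Nat.card H →
        H ≤ Subgroup.zpowers (r (1 : ZMod (2 ^ n)))) := by
  haveI : NeZero (2 ^ n) := ⟨by positivity⟩
  by_cases hA : ∀ g ∈ H, ∃ i, g = r i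
  · -- all rotations
    have hle : H ≤ Subgroup.zpowers (r (1 : ZMod (2 ^ n))) := by
      intro g hg
      obtain ⟨i, rfl⟩ := hA g hg
      refine ⟨(i.val : ℤ), ?_⟩
      show r 1 ^ (i.val : ℤ) = r i
      rw [zpow_natCast, r_one_pow, ZMod.natCast_zmod_val]
    haveI := isCyclic_zpowers (r (1 : ZMod (2 ^ n)))
    exact ⟨Or.inl (Subgroup.isCyclic_of_le hle), fun _ _ => hle⟩
  · push_neg at hA
    obtain ⟨g0, hg0, hg0'⟩ := hA
    obtain ⟨a, rfl⟩ : ∃ a, g0 = sr a := by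
      cases g0 with
      | r i => exact absurd rfl (hg0' i)
      | sr a => exact ⟨a, rfl⟩
    clear hg0'
    -- the additive subgroup of rotation indices
    set R : AddSubgroup (ZMod (2 ^ n)) :=
      { carrier := {j | r j ∈ H}
        zero_mem' := by simpa [← one_def] using H.one_mem
        add_mem' := fun {u v} hu hv => by simpa using H.mul_mem hu hv
        neg_mem' := fun {u} hu => by
          have := H.inv_mem hu
          rwa [my_r_inv] at this } with hR
    have hRmem : ∀ j : ZMod (2 ^ n), r j ∈ H ↔ j ∈ R := fun j => Iff.rfl
    obtain ⟨⟨g, hgR⟩, hgen⟩ := (inferInstance : IsAddCyclic R).exists_generator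
    -- every rotation index is a multiple of g
    have hmult : ∀ j ∈ R, ∃ k : ℤ, j = (k : ZMod (2 ^ n)) * g := by
      intro j hj
      obtain ⟨k, hk⟩ := hgen ⟨j, hj⟩
      refine ⟨k, ?_⟩
      have := congrArg (Subtype.val) hk
      simpa [zsmul_eq_mul] using this.symm
    -- closure of 4th powers lands in zpowers (r (4g))
    have hclos : Subgroup.closure {x : H | ∃ g : H, x = g ^ (if 2 = 2 then 4 else 2)} ≤
        Subgroup.comap H.subtype (Subgroup.zpowers (r ((4 : ZMod (2 ^ n)) * g))) := by
      rw [Subgroup.closure_le]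
      rintro x ⟨y, rfl⟩
      simp only [if_pos rfl, Subgroup.coe_toSubmonoid, SetLike.mem_coe, Subgroup.mem_comap]
      show ((y ^ 4 : H) : DihedralGroup (2 ^ n)) ∈ _
      rw [SubmonoidClass.coe_pow]
      rcases hy : (y : DihedralGroup (2 ^ n)) with i | i
      · have hiR : i ∈ R := by rw [← hRmem]; rw [← hy]; exact y.2
        obtain ⟨k, rfl⟩ := hmult i hiR
        refine ⟨k, ?_⟩
        show r (4 * g) ^ k = _
        rw [my_r_zpow, my_r_pow]
        congr 1
        push_cast
        ring
      · refine ⟨0, ?_⟩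
        show r (4 * g) ^ (0 : ℤ) = _
        rw [zpow_zero]
        symm
        have h2 : (sr i : DihedralGroup (2 ^ n)) ^ 2 = 1 := by rw [sq, sr_mul_self]
        rw [show (4:ℕ) = 2*2 from rfl, pow_mul, h2, one_pow]
    -- key : commutators give 2*j = 0
    have hcomm_mem : ∀ j : ZMod (2 ^ n), r j ∈ H →
        ∃ k : ℤ, -(2 * j) = (k : ZMod (2 ^ n)) * ((4 : ZMod (2 ^ n)) * g) := by
      intro j hj
      have hmem : ⁅(⟨sr a, hg0⟩ : H), (⟨r j, hj⟩ : H)⁆ ∈ commutator H := by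
        rw [commutator_def]
        exact Subgroup.commutator_mem_commutator (Subgroup.mem_top _) (Subgroup.mem_top _)
      have := hclos (hH hmem)
      rw [Subgroup.mem_comap] at this
      obtain ⟨k, hk⟩ := this
      refine ⟨k, ?_⟩
      have hk : r ((4 : ZMod (2 ^ n)) * g) ^ k = (H.subtype ⁅(⟨sr a, hg0⟩ : H), (⟨r j, hj⟩ : H)⁆ : DihedralGroup (2 ^ n)) := hk
      rw [my_r_zpow] at hk
      have hcoe : (H.subtype ⁅(⟨sr a, hg0⟩ : H), (⟨r j, hj⟩ : H)⁆ : DihedralGroup (2 ^ n))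
          = r (-(2 * j)) := by
        simp only [commutatorElement_def, map_mul, map_inv, Subgroup.coe_subtype]
        show sr a * r j * (sr a)⁻¹ * (r j)⁻¹ = _
        rw [my_sr_inv, my_r_inv, sr_mul_r, sr_mul_sr, r_mul_r]
        congr 1
        ring
      rw [hcoe] at hk
      exact r.inj hk.symm
    have h2g : 2 * g = 0 := by
      obtain ⟨k, hk⟩ := hcomm_mem g hgR
      -- -(2g) = 4kg  ⇒  (2g) = (-2k)*(2g)
      set u : ZMod (2 ^ n) := (k : ZMod (2 ^ n)) with hu
      have hw : 2 * g = (-2 * u) * (2 * g) := by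
        have : -(2 * g) = u * (4 * g) := hk
        linear_combination -this
      have hiter : ∀ m : ℕ, 2 * g = (-2 * u) ^ m * (2 * g) := by
        intro m
        induction m with
        | zero => simp
        | succ m ih => rw [pow_succ, mul_assoc, ← hw]; exact ih
      have h2n : ((-2 : ZMod (2 ^ n)) * u) ^ n = 0 := by
        rw [mul_pow, neg_pow]
        have : (2 : ZMod (2 ^ n)) ^ n = 0 := by
          have := ZMod.natCast_self (2 ^ n)
          push_cast at this
          exact this
        rw [this]
        ring
      have := hiter n
      rw [h2n, zero_mul] at this
      exact this
    have key : ∀ j : ZMod (2 ^ n), r j ∈ H → 2 * j = 0 := by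
      intro j hj
      obtain ⟨k, rfl⟩ := hmult j hj
      calc 2 * ((k : ZMod (2 ^ n)) * g) = (k : ZMod (2 ^ n)) * (2 * g) := by ring
      _ = 0 := by rw [h2g, mul_zero]
    -- the half-turn rotation index
    set hh : ZMod (2 ^ n) := ((2 ^ (n - 1) : ℕ) : ZMod (2 ^ n)) with hhh
    have hpow : (2:ℕ) ^ n = 2 * 2 ^ (n-1) := by
      conv_lhs => rw [show n = (n-1)+1 by omega]
      ring
    have two_hh : 2 * hh = 0 := by
      have h0 : ((2 * 2 ^ (n - 1) : ℕ) : ZMod (2 ^ n)) = 0 := by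
        rw [← hpow]; exact ZMod.natCast_self _
      rw [hhh]
      push_cast at h0 ⊢
      linear_combination h0
    have hh_ne : hh ≠ 0 := by
      rw [hhh, Ne, ZMod.natCast_eq_zero_iff]
      intro hdvd
      have h1 := Nat.le_of_dvd (by positivity) hdvd
      have h2 : (2:ℕ)^(n-1) < 2^n := Nat.pow_lt_pow_right (by norm_num) (by omega)
      omega
    have classify : ∀ j : ZMod (2 ^ n), 2 * j = 0 → j = 0 ∨ j = hh := by
      intro j hj
      have hv : ((j.val : ℕ) : ZMod (2 ^ n)) = j := ZMod.natCast_zmod_val j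
      have h0 : ((2 * j.val : ℕ) : ZMod (2 ^ n)) = 0 := by
        push_cast [hv]
        linear_combination hj
      rw [ZMod.natCast_eq_zero_iff] at h0
      obtain ⟨t, ht⟩ := h0
      have hvlt : j.val < 2 ^ n := ZMod.val_lt j
      have ht2 : t < 2 := by
        by_contra hc
        push_neg at hc
        have := Nat.mul_le_mul_left (2 ^ n) hc
        omega
      interval_cases t
      · left
        exact (ZMod.val_eq_zero j).mp (by omega)
      · right
        have hval : j.val = 2 ^ (n-1) := by omega
        rw [← hv, hval]
    have hsr_mem : ∀ b : ZMod (2 ^ n), sr b ∈ H → b = a ∨ b = a + hh := by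
      intro b hb
      have hr : r (a - b) ∈ H := by
        have := H.mul_mem hb hg0
        rwa [sr_mul_sr] at this
      rcases classify _ (key _ hr) with h | h
      · left; linear_combination -h
      · right; linear_combination -h - two_hh
    have hclassH : ∀ w ∈ H, w = 1 ∨ w = r hh ∨ w = sr a ∨ w = sr (a + hh) := by
      intro w hw
      cases w with
      | r j =>
        rcases classify j (key j hw) with h | h
        · left; rw [h, one_def]
        · right; left; rw [h]
      | sr b =>
        rcases hsr_mem b hw with h | h
        · right; right; left; rw [h]
        · right; right; right; rw [h]
    have hsq : ∀ w ∈ H, w * w = 1 := by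
      intro w hw
      cases w with
      | r j => rw [r_mul_r, ← two_mul, key j hw, one_def]
      | sr b => exact sr_mul_self b
    have hsecond : IsCyclic H → 2 < Nat.card H → H ≤ Subgroup.zpowers (r (1 : ZMod (2 ^ n))) := by
      intro hcyc hcard
      exfalso
      obtain ⟨gg, hgg⟩ := hcyc.exists_generator
      have hord : orderOf gg = Nat.card H := orderOf_eq_card_of_forall_mem_zpowers hgg
      have hgg2 : gg ^ 2 = 1 := by
        apply Subtype.ext
        push_cast [sq]
        exact hsq _ gg.2
      have hdvd : orderOf gg ∣ 2 := orderOf_dvd_of_pow_eq_one hgg2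
      have := Nat.le_of_dvd (by norm_num) hdvd
      omega
    by_cases hrh : r hh ∈ H
    · -- Klein four-group
      set x : DihedralGroup (2 ^ n) := r hh with hxd
      set y : DihedralGroup (2 ^ n) := sr a with hyd
      have hx2 : x ^ 2 = 1 := by rw [sq]; exact hsq x hrh
      have hy2 : y ^ 2 = 1 := by rw [sq]; exact hsq y hg0
      have hcomm : Commute x y := by
        show r hh * sr a = sr a * r hh
        rw [sr_mul_r, r_mul_sr]
        congr 1
        linear_combination -two_hh
      let f : Multiplicative (ZMod 2 × ZMod 2) → DihedralGroup (2 ^ n) :=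
        fun p => x ^ ((Multiplicative.toAdd p).1.val) * y ^ ((Multiplicative.toAdd p).2.val)
      have hf : ∀ p q, f (p * q) = f p * f q := by
        intro p q
        show x ^ (((Multiplicative.toAdd p).1 + (Multiplicative.toAdd q).1).val) *
             y ^ (((Multiplicative.toAdd p).2 + (Multiplicative.toAdd q).2).val) = _
        rw [ZMod.val_add, ZMod.val_add, ← pow_eq_pow_mod _ hx2, ← pow_eq_pow_mod _ hy2,
          pow_add, pow_add]
        exact ((hcomm.pow_pow _ _).mul_mul_mul_comm _ _)
      have hfH : ∀ p, f p ∈ H := fun p => H.mul_mem (H.pow_mem hrh _) (H.pow_mem hg0 _)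
      let ψ : Multiplicative (ZMod 2 × ZMod 2) →* H :=
        { toFun := fun p => ⟨f p, hfH p⟩
          map_one' := by
            apply Subtype.ext
            show x ^ (0 : ZMod 2).val * y ^ (0 : ZMod 2).val = 1
            rw [ZMod.val_zero, pow_zero, pow_zero, one_mul]
          map_mul' := fun p q => Subtype.ext (hf p q) }
      have hz : ∀ z : ZMod 2, z = 0 ∨ z = 1 := by decide
      have hbij : Function.Bijective ψ := by
        constructor
        · apply (injective_iff_map_eq_one ψ).mpr
          intro p hp
          have hp' : f p = 1 := congrArg Subtype.val hp
          rcases hz (Multiplicative.toAdd p).1 with h1 | h1 <;>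
            rcases hz (Multiplicative.toAdd p).2 with h2 | h2
          · have : Multiplicative.toAdd p = 0 := Prod.ext h1 h2
            simpa using this
          · exfalso
            simp only [f, h1, h2, ZMod.val_zero, ZMod.val_one, pow_zero, pow_one, one_mul] at hp'
            rw [hyd, one_def] at hp'
            exact absurd hp' (by intro h; cases h)
          · exfalso
            simp only [f, h1, h2, ZMod.val_zero, ZMod.val_one, pow_zero, pow_one, mul_one] at hp'
            rw [hxd, one_def] at hp'
            exact hh_ne (r.inj hp')
          · exfalso
            simp only [f, h1, h2, ZMod.val_one, pow_one] at hp'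
            rw [hxd, hyd, r_mul_sr, one_def] at hp'
            exact absurd hp' (by intro h; cases h)
        · rintro ⟨w, hw⟩
          rcases hclassH w hw with rfl | rfl | rfl | rfl
          · refine ⟨1, Subtype.ext ?_⟩
            show x ^ (0 : ZMod 2).val * y ^ (0 : ZMod 2).val = 1
            rw [ZMod.val_zero, pow_zero, pow_zero, one_mul]
          · refine ⟨Multiplicative.ofAdd ((1 : ZMod 2), (0 : ZMod 2)), ?_⟩
            apply Subtype.ext
            show x ^ (1 : ZMod 2).val * y ^ (0 : ZMod 2).val = r hh
            rw [ZMod.val_one, ZMod.val_zero, pow_one, pow_zero, mul_one]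
          · refine ⟨Multiplicative.ofAdd ((0 : ZMod 2), (1 : ZMod 2)), ?_⟩
            apply Subtype.ext
            show x ^ (0 : ZMod 2).val * y ^ (1 : ZMod 2).val = sr a
            rw [ZMod.val_one, ZMod.val_zero, pow_one, pow_zero, one_mul]
          · refine ⟨Multiplicative.ofAdd ((1 : ZMod 2), (1 : ZMod 2)), ?_⟩
            apply Subtype.ext
            show x ^ (1 : ZMod 2).val * y ^ (1 : ZMod 2).val = sr (a + hh)
            rw [ZMod.val_one, pow_one, pow_one, hxd, hyd, r_mul_sr]
            congr 1
            linear_combination -two_hh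
      exact ⟨Or.inr ⟨(MulEquiv.ofBijective ψ hbij).symm⟩, hsecond⟩
    · -- H = {1, sr a}, cyclic
      have hle2 : H ≤ Subgroup.zpowers (sr a) := by
        intro w hw
        rcases hclassH w hw with rfl | rfl | rfl | rfl
        · exact Subgroup.one_mem _
        · exact absurd hw hrh
        · exact Subgroup.mem_zpowers _
        · exfalso
          apply hrh
          have := H.mul_mem hw hg0
          rw [sr_mul_sr] at this
          have heq : a - (a + hh) = hh := by linear_combination -two_hh
          rwa [heq] at this
      haveI := isCyclic_zpowers (sr a)
      exact ⟨Or.inl (Subgroup.isCyclic_of_le hle2), hsecond⟩
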